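/- Let Γ be a countable group, Λ ≤ Γ a subgroup, and let Λ act on the coset space Γ/Λ by left multiplication. Suppose that there is no Λ-invariant mean on ℓ∞(Γ/Λ) vanishing on the indicator function of every finite subset of Γ/Λ (equivalently, no Λ-invariant probability measure on the Stone–Čech boundary ∂_β(Γ/Λ)). Then there exists a Λ-invariant mean on ℓ∞(Γ/Λ ∖ {eΛ}) if and only if some orbit Λ·(gΛ) with g ∉ Λ is finite. In particular, Λ has the spectral gap property in Γ if and only if every orbit Λ·(gΛ) with g ∉ Λ is infinite. -/

import Mathlib

/-- A real-valued function on `X` is bounded. -/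
def Bdd {X : Type*} (f : X → ℝ) : Prop := ∃ C : ℝ, ∀ x, |f x| ≤ C

/-- A mean on `ℓ∞(X)`: a positive normalized linear functional on the bounded
real-valued functions on `X` (its values on unbounded functions are irrelevant). -/
structure IsMean {X : Type*} (m : (X → ℝ) → ℝ) : Prop where
  map_add : ∀ f g : X → ℝ, Bdd f → Bdd g → m (f + g) = m f + m g
  map_smul : ∀ (c : ℝ) (f : X → ℝ), Bdd f → m (c • f) = c * m f
  nonneg : ∀ f : X → ℝ, Bdd f → (∀ x, 0 ≤ f x) → 0 ≤ m f
  map_one : m (fun _ => (1 : ℝ)) = 1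

/-- There exists a `Λ`-invariant mean on `ℓ∞(Γ/Λ ∖ {eΛ})`, where `Λ` acts on the coset
space `Γ/Λ` by left multiplication. -/
def ExistsInvariantMeanOnCosetsMinusBase {Γ : Type*} [Group Γ] (Λ : Subgroup Γ) : Prop :=
  ∃ m : ({x : Γ ⧸ Λ // x ≠ ((1 : Γ) : Γ ⧸ Λ)} → ℝ) → ℝ, IsMean m ∧
    ∀ (γ : Λ) (f : {x : Γ ⧸ Λ // x ≠ ((1 : Γ) : Γ ⧸ Λ)} → ℝ), Bdd f →
      m (fun x => f ⟨(γ : Γ)⁻¹ • (x : Γ ⧸ Λ), by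
        intro h
        apply x.2
        have hx : (x : Γ ⧸ Λ) = (γ : Γ) • ((γ : Γ)⁻¹ • (x : Γ ⧸ Λ)) :=
          (smul_inv_smul _ _).symm
        rw [hx, h, MulAction.Quotient.smul_coe]
        simp [QuotientGroup.eq]⟩) = m f

section Aux
variable {Γ : Type*} [Group Γ] {Λ : Subgroup Γ}

private lemma mean_zero {X : Type*} {m : (X → ℝ) → ℝ} (hm : IsMean m) :
    m (fun _ => (0:ℝ)) = 0 := by
  have hb : Bdd (fun _ : X => (0:ℝ)) := ⟨0, by simp⟩
  have h := hm.map_smul 0 (fun _ => (0:ℝ)) hb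
  have he : ((0:ℝ) • (fun _ : X => (0:ℝ))) = (fun _ : X => (0:ℝ)) := by
    funext x; simp
  rw [he] at h; linarith

private lemma mean_mono {X : Type*} {m : (X → ℝ) → ℝ} (hm : IsMean m)
    {f g : X → ℝ} (hf : Bdd f) (hg : Bdd g) (hle : ∀ x, f x ≤ g x) : m f ≤ m g := by
  obtain ⟨C, hC⟩ := hf
  obtain ⟨D, hD⟩ := hg
  have hb : Bdd (g - f) := ⟨D + C, fun x => by
    have h1 := abs_sub (g x) (f x)
    have := hC x; have := hD x
    simp only [Pi.sub_apply]
    calc |g x - f x| ≤ |g x| + |f x| := abs_sub _ _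
      _ ≤ D + C := by linarith⟩
  have h := hm.map_add f (g - f) ⟨C, hC⟩ hb
  have heq : f + (g - f) = g := by funext x; simp
  rw [heq] at h
  have h2 := hm.nonneg (g - f) hb (fun x => by simp [hle x])
  linarith

private lemma smul_base (γ : Λ) : (γ:Γ) • ((1:Γ) : Γ ⧸ Λ) = ((1:Γ) : Γ ⧸ Λ) := by
  rw [MulAction.Quotient.smul_coe]
  simp [QuotientGroup.eq]

private lemma orbit_ne_base {g : Γ} (hg : g ∉ Λ) {y : Γ ⧸ Λ}
    (hy : y ∈ MulAction.orbit Λ ((g : Γ ⧸ Λ))) : y ≠ ((1:Γ) : Γ ⧸ Λ) := by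
  obtain ⟨γ, rfl⟩ := hy
  intro h
  have h1 : (γ:Γ) • ((g : Γ ⧸ Λ)) = ((1:Γ) : Γ ⧸ Λ) := h
  rw [MulAction.Quotient.smul_coe] at h1
  rw [QuotientGroup.eq] at h1
  have h' := h1
  have hmem : (γ:Γ) * g ∈ Λ := by simpa using Λ.inv_mem h'
  exact hg (by simpa using Λ.mul_mem (Λ.inv_mem γ.2) hmem)

private lemma smul_mem_orbit' (δ : Λ) {a y : Γ ⧸ Λ} (hy : y ∈ MulAction.orbit Λ a) :
    (δ:Γ) • y ∈ MulAction.orbit Λ a := by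
  obtain ⟨ε, rfl⟩ := hy
  exact ⟨δ * ε, by show (δ * ε) • a = (δ:Γ) • (ε • a); rw [mul_smul]; rfl⟩

end Aux

section Part2
variable {Γ : Type*} [Group Γ] {Λ : Subgroup Γ}

open scoped Classical in
private noncomputable def extz (Λ : Subgroup Γ)
    (f : {x : Γ ⧸ Λ // x ≠ ((1:Γ) : Γ ⧸ Λ)} → ℝ) (y : Γ ⧸ Λ) : ℝ :=
  if h : y ≠ ((1:Γ) : Γ ⧸ Λ) then f ⟨y, h⟩ else 0

private lemma exists_mean_of_finite_orbit {g : Γ} (hg : g ∉ Λ)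
    (hF : (MulAction.orbit Λ ((g : Γ ⧸ Λ))).Finite) :
    ExistsInvariantMeanOnCosetsMinusBase Λ := by
  classical
  set O : Finset (Γ ⧸ Λ) := hF.toFinset with hO
  have hmemO : ∀ y, y ∈ O ↔ y ∈ MulAction.orbit Λ ((g:Γ⧸Λ)) := fun y => hF.mem_toFinset
  have hne : ∀ y ∈ O, y ≠ ((1:Γ) : Γ ⧸ Λ) := fun y hy => orbit_ne_base hg ((hmemO y).1 hy)
  have hOne : O.Nonempty := ⟨(g:Γ⧸Λ), (hmemO _).2 (MulAction.mem_orbit_self _)⟩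
  have hcard : (0:ℝ) < O.card := by exact_mod_cast Finset.card_pos.2 hOne
  refine ⟨fun f => (∑ y ∈ O, extz Λ f y) / O.card, ⟨?_, ?_, ?_, ?_⟩, ?_⟩
  · intro f g' hf hg'
    rw [← add_div, ← Finset.sum_add_distrib]
    congr 1
    apply Finset.sum_congr rfl
    intro y _
    by_cases h : y = ((1:Γ) : Γ ⧸ Λ) <;> simp [extz, h]
  · intro c f hf
    rw [← mul_div_assoc, Finset.mul_sum]
    congr 1
    apply Finset.sum_congr rfl
    intro y _
    by_cases h : y = ((1:Γ) : Γ ⧸ Λ) <;> simp [extz, h]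
  · intro f hf hpos
    apply div_nonneg _ (le_of_lt hcard)
    apply Finset.sum_nonneg
    intro y _
    by_cases h : y = ((1:Γ) : Γ ⧸ Λ) <;> simp [extz, h, hpos]
  · have : ∑ y ∈ O, extz Λ (fun _ => (1:ℝ)) y = O.card := by
      rw [Finset.sum_congr rfl (fun y hy => by simp [extz, hne y hy] : ∀ y ∈ O, extz Λ (fun _ => (1:ℝ)) y = 1)]
      simp
    rw [this, div_self (ne_of_gt hcard)]
  · intro γ f hf
    refine congrArg (fun s => s / (O.card:ℝ)) ?_
    have step1 : ∀ y ∈ O, extz Λ (fun x => f ⟨(γ : Γ)⁻¹ • (x : Γ ⧸ Λ), by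
        intro h
        apply x.2
        have hx : (x : Γ ⧸ Λ) = (γ : Γ) • ((γ : Γ)⁻¹ • (x : Γ ⧸ Λ)) :=
          (smul_inv_smul _ _).symm
        rw [hx, h, MulAction.Quotient.smul_coe]
        simp [QuotientGroup.eq]⟩) y = extz Λ f ((γ:Γ)⁻¹ • y) := by
      intro y hy
      have hy' : y ≠ ((1:Γ) : Γ ⧸ Λ) := hne y hy
      have hy2 : (γ:Γ)⁻¹ • y ≠ ((1:Γ) : Γ ⧸ Λ) := by
        intro hc
        apply hy'
        rw [← smul_inv_smul (γ:Γ) y, hc]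
        exact smul_base γ
      unfold extz
      rw [dif_pos hy', dif_pos hy2]
    rw [Finset.sum_congr rfl step1]
    refine Finset.sum_equiv (MulAction.toPerm (γ⁻¹ : Λ)) ?_ ?_
    · intro y
      rw [hmemO, hmemO]
      constructor
      · intro h
        exact smul_mem_orbit' γ⁻¹ h
      · intro h
        have h2 := smul_mem_orbit' γ h
        have h3 : (γ:Γ) • (MulAction.toPerm (γ⁻¹ : Λ)) y = y := by
          show (γ:Γ) • ((γ⁻¹ : Λ) • y) = y
          show (γ:Γ) • (((γ⁻¹:Λ):Γ) • y) = y
          simp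
        rwa [h3] at h2
    · intro y _
      rfl

end Part2

section Part3
variable {Γ : Type*} [Group Γ] {Λ : Subgroup Γ}

private abbrev Cmp (Λ : Subgroup Γ) := {x : Γ ⧸ Λ // x ≠ ((1:Γ) : Γ ⧸ Λ)}

private lemma bdd_indicator {X : Type*} (S : Set X) :
    Bdd (Set.indicator S (fun _ => (1:ℝ))) :=
  ⟨1, fun y => by by_cases h : y ∈ S <;> simp [Set.indicator_apply, h]⟩

private lemma mean_finset {X : Type*} {m : (X → ℝ) → ℝ} (hm : IsMean m) (t : Finset X) :
    m (Set.indicator (↑t) (fun _ => (1:ℝ)))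
      = ∑ z ∈ t, m (Set.indicator {z} (fun _ => (1:ℝ))) := by
  classical
  induction t using Finset.induction_on with
  | empty =>
    have h0 : (Set.indicator (↑(∅:Finset X)) (fun _ => (1:ℝ))) = (fun _ : X => (0:ℝ)) := by
      funext y; simp
    rw [h0, mean_zero hm]
    simp
  | @insert a s ha ih =>
    have hdecomp : (Set.indicator (↑(insert a s) : Set X) (fun _ => (1:ℝ)))
        = Set.indicator {a} (fun _ => (1:ℝ)) + Set.indicator (↑s) (fun _ => (1:ℝ)) := by
      funext y
      by_cases h1 : y = a
      · subst h1; simp [Set.indicator_apply, ha]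
      · by_cases h2 : y ∈ s <;> simp [Set.indicator_apply, h1, h2]
    rw [hdecomp, hm.map_add _ _ (bdd_indicator _) (bdd_indicator _), ih, Finset.sum_insert ha]

private lemma no_mean_of_infinite
    (hinf : ∀ g : Γ, g ∉ Λ → (MulAction.orbit Λ ((g : Γ ⧸ Λ))).Infinite)
    (hE : ExistsInvariantMeanOnCosetsMinusBase Λ) :
    ∃ M : ((Γ ⧸ Λ) → ℝ) → ℝ, IsMean M ∧
      (∀ (γ : Λ) (f : (Γ ⧸ Λ) → ℝ), Bdd f → M (fun x => f ((γ : Γ)⁻¹ • x)) = M f) ∧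
      (∀ S : Set (Γ ⧸ Λ), S.Finite → M (Set.indicator S (fun _ => (1 : ℝ))) = 0) := by
  classical
  obtain ⟨m, hm, hinv⟩ := hE
  have hBp : ∀ f : (Γ ⧸ Λ) → ℝ, Bdd f → Bdd (fun x : Cmp Λ => f x.val) := by
    rintro f ⟨C, hC⟩; exact ⟨C, fun x => hC x.val⟩
  have horb : ∀ x z : Cmp Λ, z.val ∈ MulAction.orbit Λ x.val →
      m (Set.indicator {z} (fun _ => (1:ℝ))) = m (Set.indicator {x} (fun _ => (1:ℝ))) := by
    rintro x z ⟨γ, hγ⟩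
    have hγ' : (γ:Γ) • (x:Γ⧸Λ) = (z:Γ⧸Λ) := hγ
    have h := hinv γ (Set.indicator {x} (fun _ => (1:ℝ))) (bdd_indicator _)
    rw [← h]
    congr 1
    funext y
    simp only [Set.indicator_apply, Set.mem_singleton_iff]
    refine if_congr ?_ rfl rfl
    rw [Subtype.ext_iff, Subtype.ext_iff]
    constructor
    · intro hh
      show (γ:Γ)⁻¹ • (y:Γ⧸Λ) = (x:Γ⧸Λ)
      rw [hh, ← hγ']
      exact inv_smul_smul (γ:Γ) x.val
    · intro hh
      have hh' : (γ:Γ)⁻¹ • (y:Γ⧸Λ) = (x:Γ⧸Λ) := hh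
      rw [← hγ', ← hh']
      exact (smul_inv_smul (γ:Γ) (y:Γ⧸Λ)).symm
  have hsingle : ∀ x : Cmp Λ, m (Set.indicator {x} (fun _ => (1:ℝ))) = 0 := by
    intro x
    obtain ⟨g, hgx⟩ := QuotientGroup.mk_surjective x.val
    have hgΛ : g ∉ Λ := by
      intro hmem
      apply x.2
      rw [← hgx, QuotientGroup.eq]
      simpa using Λ.inv_mem hmem
    have hIO : (MulAction.orbit Λ x.val).Infinite := by rw [← hgx]; exact hinf g hgΛ
    set c := m (Set.indicator {x} (fun _ => (1:ℝ))) with hc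
    have hc0 : 0 ≤ c :=
      hm.nonneg _ (bdd_indicator _) (fun y => Set.indicator_nonneg (fun _ _ => by norm_num) y)
    have key : ∀ n : ℕ, (n:ℝ) * c ≤ 1 := by
      intro n
      obtain ⟨t, hts, htc⟩ := hIO.exists_subset_card_eq n
      have hnb : ∀ y ∈ t, y ≠ ((1:Γ) : Γ ⧸ Λ) := by
        intro y hy
        apply orbit_ne_base hgΛ
        rw [hgx]
        exact hts hy
      set t' : Finset (Cmp Λ) := t.subtype (fun y => y ≠ ((1:Γ) : Γ ⧸ Λ)) with ht'
      have ht'card : t'.card = n := by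
        rw [ht', Finset.card_subtype, Finset.filter_true_of_mem hnb, htc]
      have hmem' : ∀ z : Cmp Λ, z ∈ t' ↔ z.val ∈ t := by
        intro z; simp [ht', Finset.mem_subtype]
      have hsum := mean_finset hm t'
      have hval : ∀ z ∈ t', m (Set.indicator {z} (fun _ => (1:ℝ))) = c := by
        intro z hz
        exact horb x z (hts ((hmem' z).1 hz))
      rw [Finset.sum_congr rfl hval, Finset.sum_const, ht'card, nsmul_eq_mul] at hsum
      have hle : m (Set.indicator (↑t' : Set (Cmp Λ)) (fun _ => (1:ℝ))) ≤ m (fun _ => (1:ℝ)) := by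
        apply mean_mono hm (bdd_indicator _) ⟨1, fun y => by norm_num⟩
        intro y
        by_cases h : y ∈ (↑t' : Set (Cmp Λ)) <;> simp [Set.indicator_apply, h]
      rw [hsum, hm.map_one] at hle
      exact hle
    by_contra hcne
    have hcpos : 0 < c := lt_of_le_of_ne hc0 (Ne.symm hcne)
    obtain ⟨n, hn⟩ := exists_nat_gt (1 / c)
    have hkn := key n
    have h2 : (1:ℝ) < n * c := by
      rw [div_lt_iff₀ hcpos] at hn
      linarith
    linarith
  refine ⟨fun F => m (fun x : Cmp Λ => F x.val), ⟨?_, ?_, ?_, ?_⟩, ?_, ?_⟩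
  · intro f g hf hg
    exact hm.map_add (fun x => f x.val) (fun x => g x.val) (hBp f hf) (hBp g hg)
  · intro c f hf
    exact hm.map_smul c (fun x => f x.val) (hBp f hf)
  · intro f hf hpos
    exact hm.nonneg _ (hBp f hf) (fun x => hpos x.val)
  · exact hm.map_one
  · intro γ f hf
    exact hinv γ (fun z => f z.val) (hBp f hf)
  · intro S hS
    have hpre : ((Subtype.val) ⁻¹' S : Set (Cmp Λ)).Finite :=
      hS.preimage (Subtype.val_injective.injOn)
    set t' := hpre.toFinset with ht'
    have heqf : (fun x : Cmp Λ => Set.indicator S (fun _ => (1:ℝ)) x.val)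
        = Set.indicator (↑t' : Set (Cmp Λ)) (fun _ => (1:ℝ)) := by
      funext y
      by_cases h : y.val ∈ S
      · have hy : y ∈ (↑t' : Set (Cmp Λ)) := by simp [ht', Set.Finite.mem_toFinset, h]
        simp [Set.indicator_apply, h, hy]
      · have hy : y ∉ (↑t' : Set (Cmp Λ)) := by simp [ht', Set.Finite.mem_toFinset, h]
        simp [Set.indicator_apply, h, hy]
    show m (fun x : Cmp Λ => Set.indicator S (fun _ => (1:ℝ)) x.val) = 0
    rw [heqf, mean_finset hm t', Finset.sum_congr rfl (fun z _ => hsingle z),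
      Finset.sum_const, smul_zero]

end Part3

/-- If there is no `Λ`-invariant mean on `ℓ∞(Γ/Λ)` vanishing on indicators of finite
sets (no `Λ`-invariant measure on `∂_β(Γ/Λ)`), then: a `Λ`-invariant mean on
`ℓ∞(Γ/Λ ∖ {eΛ})` exists iff some orbit `Λ·(gΛ)`, `g ∉ Λ`, is finite; in particular
`Λ` has spectral gap in `Γ` iff every orbit `Λ·(gΛ)`, `g ∉ Λ`, is infinite. -/
theorem spectral_gap_iff_infinite_orbits {Γ : Type*} [Group Γ] [Countable Γ]
    (Λ : Subgroup Γ)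
    (hno : ¬ ∃ m : ((Γ ⧸ Λ) → ℝ) → ℝ, IsMean m ∧
      (∀ (γ : Λ) (f : (Γ ⧸ Λ) → ℝ), Bdd f → m (fun x => f ((γ : Γ)⁻¹ • x)) = m f) ∧
      (∀ S : Set (Γ ⧸ Λ), S.Finite → m (Set.indicator S (fun _ => (1 : ℝ))) = 0)) :
    (ExistsInvariantMeanOnCosetsMinusBase Λ ↔
      ∃ g : Γ, g ∉ Λ ∧ (MulAction.orbit Λ ((g : Γ ⧸ Λ))).Finite) ∧
    (¬ ExistsInvariantMeanOnCosetsMinusBase Λ ↔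
      ∀ g : Γ, g ∉ Λ → (MulAction.orbit Λ ((g : Γ ⧸ Λ))).Infinite) := by
  have main : ExistsInvariantMeanOnCosetsMinusBase Λ ↔
      ∃ g : Γ, g ∉ Λ ∧ (MulAction.orbit Λ ((g : Γ ⧸ Λ))).Finite := by
    constructor
    · intro hE
      by_contra hne
      push_neg at hne
      exact hno (no_mean_of_infinite (fun g hg => hne g hg) hE)
    · rintro ⟨g, hg, hF⟩
      exact exists_mean_of_finite_orbit hg hF
  refine ⟨main, ?_⟩
  rw [main]
  push_neg
  rfl
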